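/- If B, C ∈ ℝ^{n×n}, λ ∈ [0,1], and det is evaluated along the segment t ↦ det(tB + (1-t)C), then under the hypothesis rank(B - C) = 1, the function t ↦ det(tB + (1-t)C) is affine in t; in particular det(λB + (1-λ)C) = λ det(B) + (1-λ) det(C). -/

import Mathlib

open Matrix

lemma aux_rank_one {n : ℕ} (A : Matrix (Fin n) (Fin n) ℝ) (h : A.rank ≤ 1) :
    ∃ u v : Fin n → ℝ, ∀ i j, A i j = u i * v j := by
  have h1 : Module.finrank ℝ (LinearMap.range A.mulVecLin) ≤ 1 := h
  obtain ⟨u₀, hu₀⟩ := finrank_le_one_iff.mp h1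
  have hcol : ∀ j, (fun i => A i j) ∈ LinearMap.range A.mulVecLin := by
    intro j
    refine ⟨Pi.single j 1, ?_⟩
    funext i
    simp [Matrix.mulVecLin_apply, Matrix.mulVec_single]
  choose v hv using fun j => hu₀ ⟨_, hcol j⟩
  refine ⟨(u₀ : Fin n → ℝ), v, fun i j => ?_⟩
  have := congrFun (congrArg Subtype.val (hv j)) i
  simpa [mul_comm] using this.symm

lemma aux_affine {n : ℕ} (C : Matrix (Fin n) (Fin n) ℝ) (u v : Fin n → ℝ) :
    ∃ a b : ℝ, ∀ t : ℝ,
      (C + t • Matrix.of (fun i j => u i * v j)).det = a * t + b := by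
  classical
  set f : (Fin n → ℝ) [⋀^Fin n]→ₗ[ℝ] ℝ := Matrix.detRowAlternating
  refine ⟨∑ i, u i * f (Function.update C i v), f C, fun t => ?_⟩
  set m : Fin n → Fin n → ℝ := fun i => (t * u i) • v with hm
  set m' : Fin n → Fin n → ℝ := fun i => C i with hm'
  have hrows : ((C + t • Matrix.of (fun i j => u i * v j)) : Matrix (Fin n) (Fin n) ℝ)
      = Matrix.of (m + m') := by
    ext i j
    simp [m, m', mul_comm, mul_assoc, mul_left_comm]
    ring
  have hdet : (C + t • Matrix.of (fun i j => u i * v j)).det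
      = f.toMultilinearMap (m + m') := by
    rw [hrows]; rfl
  rw [hdet, f.toMultilinearMap.map_add_univ m m']
  set F : Finset (Fin n) → ℝ := fun s => f.toMultilinearMap (s.piecewise m m') with hF
  set S : Finset (Finset (Fin n)) := insert ∅ (Finset.univ.image fun i => ({i} : Finset (Fin n))) with hS
  have hzero : ∀ s ∈ Finset.univ, s ∉ S → F s = 0 := by
    intro s _ hs
    have hcard : 1 < s.card := by
      rcases Nat.lt_or_ge 1 s.card with h1 | h1
      · exact h1
      · exfalso
        interval_cases hc : s.card
        · exact hs (by simp [S, Finset.card_eq_zero.mp hc])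
        · obtain ⟨i, rfl⟩ := Finset.card_eq_one.mp hc
          exact hs (by simp [S])
    obtain ⟨i, hi, j, hj, hij⟩ := Finset.one_lt_card.mp hcard
    set g := s.piecewise m m' with hg
    have hgi : g i = (t * u i) • v := Finset.piecewise_eq_of_mem _ _ _ hi
    have hgj : g j = (t * u j) • v := Finset.piecewise_eq_of_mem _ _ _ hj
    have e1 : f g = (t * u i) • f (Function.update g i v) := by
      conv_lhs => rw [← Function.update_eq_self i g, hgi]
      exact f.map_update_smul g i (t * u i) v
    set g' := Function.update g i v with hg'
    have hg'j : g' j = (t * u j) • v := by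
      rw [hg', Function.update_of_ne (Ne.symm hij) _ _, hgj]
    have e2 : f g' = (t * u j) • f (Function.update g' j v) := by
      conv_lhs => rw [← Function.update_eq_self j g', hg'j]
      exact f.map_update_smul g' j (t * u j) v
    have e3 : f (Function.update g' j v) = 0 := by
      refine f.map_eq_zero_of_eq _ (i := i) (j := j) ?_ hij
      rw [Function.update_of_ne hij, hg', Function.update_self, Function.update_self]
    show F s = 0
    rw [hF]
    show f g = 0
    rw [e1, e2, e3, smul_zero, smul_zero]
  rw [← Finset.sum_subset (Finset.subset_univ S) hzero]
  have hSempty : (∅ : Finset (Fin n)) ∉ Finset.univ.image fun i => ({i} : Finset (Fin n)) := by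
    simp
  rw [hS, Finset.sum_insert hSempty, Finset.sum_image (by intro x _ y _ hxy; simpa using hxy)]
  have hFempty : F ∅ = f C := by
    rw [hF]; show f (Finset.piecewise ∅ m m') = f C
    rw [Finset.piecewise_empty]
  have hFsing : ∀ i, F {i} = (t * u i) * f (Function.update C i v) := by
    intro i
    rw [hF]
    show f (Finset.piecewise {i} m m') = _
    rw [Finset.piecewise_singleton]
    have : Function.update m' i (m i) = Function.update (fun k => C k) i ((t * u i) • v) := rfl
    rw [this, f.map_update_smul]
    rfl
  rw [hFempty]
  simp only [hFsing]
  rw [Finset.sum_mul]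
  ring_nf

theorem stmt_4 (n : ℕ) (B C : Matrix (Fin n) (Fin n) ℝ)
    (h : (B - C).rank = 1) :
    (∃ a b : ℝ, ∀ t : ℝ, (t • B + (1 - t) • C).det = a * t + b) ∧
    ∀ lam : ℝ, lam ∈ Set.Icc (0 : ℝ) 1 →
      (lam • B + (1 - lam) • C).det = lam * B.det + (1 - lam) * C.det := by
  obtain ⟨u, v, huv⟩ := aux_rank_one (B - C) h.le
  have hA : (B - C) = Matrix.of (fun i j => u i * v j) := by
    ext i j; exact huv i j
  obtain ⟨a, b, hab⟩ := aux_affine C u v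
  have key : ∀ t : ℝ, (t • B + (1 - t) • C).det = a * t + b := by
    intro t
    have : (t • B + (1 - t) • C) = C + t • Matrix.of (fun i j => u i * v j) := by
      rw [← hA]
      ext i j
      simp [Matrix.sub_apply, Matrix.add_apply, Matrix.smul_apply]
      ring
    rw [this, hab t]
  refine ⟨⟨a, b, key⟩, fun lam _ => ?_⟩
  have h1 : B.det = a * 1 + b := by
    have := key 1
    simpa using this
  have h0 : C.det = b := by
    have := key 0
    simpa using this
  rw [key lam, h1, h0]
  ring
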